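/- arXiv:1206.1473 — 2 statements merged into one kernel-verified Lean document; each statement's English description precedes it below -/
import Mathlib

section
/- The map V ↦ tr(A(V)_-^γ) is convex in V when γ ≥ 1, where A(V) = A_0 + V for a fixed symmetric matrix A_0 and V ranges over symmetric matrices; equivalently, tr(A_-^γ)^{1/γ} is a supremum of affine functions of A and hence (tr(A_-^γ))^{1/γ} is convex in A. -/
open Matrix

/-- `U * diag ((λᵢ)₋ ^ p) * U*`: the `p`-th power (real power) of the negative part
`A₋ = max (-A, 0)` of a symmetric matrix `A`, defined via the spectral decomposition. -/
noncomputable def negPartRpow {m : ℕ} {A : Matrix (Fin m) (Fin m) ℝ} (hA : A.IsHermitian)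
    (p : ℝ) : Matrix (Fin m) (Fin m) ℝ :=
  (hA.eigenvectorUnitary : Matrix (Fin m) (Fin m) ℝ) *
    Matrix.diagonal (fun i => (max (-(hA.eigenvalues i)) 0) ^ p) *
    star (hA.eigenvectorUnitary : Matrix (Fin m) (Fin m) ℝ)

/-- `tr(A₋^γ)`, extended by `0` to non-symmetric matrices. -/
noncomputable def trNegPow {m : ℕ} (γ : ℝ) (A : Matrix (Fin m) (Fin m) ℝ) : ℝ :=
  if h : A.IsHermitian then (negPartRpow h γ).trace else 0

section Aux

open Finset

variable {m : ℕ}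

private lemma negPart_combo {a b x y : ℝ} (ha : 0 ≤ a) (hb : 0 ≤ b) :
    max (-(a * x + b * y)) 0 ≤ a * max (-x) 0 + b * max (-y) 0 := by
  have h1 : -x ≤ max (-x) 0 := le_max_left _ _
  have h2 : -y ≤ max (-y) 0 := le_max_left _ _
  have h3 : (0:ℝ) ≤ max (-x) 0 := le_max_right _ _
  have h4 : (0:ℝ) ≤ max (-y) 0 := le_max_right _ _
  apply max_le
  · nlinarith
  · positivity

private lemma phi_cvx {γ : ℝ} (hγ : 1 ≤ γ) :
    ConvexOn ℝ Set.univ (fun x : ℝ => max (-x) 0 ^ γ) := by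
  refine ⟨convex_univ, fun x _ y _ a b ha hb hab => ?_⟩
  simp only [smul_eq_mul]
  have h1 : max (-(a * x + b * y)) 0 ≤ a * max (-x) 0 + b * max (-y) 0 :=
    negPart_combo ha hb
  have h2 : max (-(a * x + b * y)) 0 ^ γ ≤ (a * max (-x) 0 + b * max (-y) 0) ^ γ :=
    Real.rpow_le_rpow (le_max_right _ _) h1 (by linarith)
  refine h2.trans ?_
  have := (convexOn_rpow hγ).2 (Set.mem_Ici.2 (le_max_right (-x) 0))
    (Set.mem_Ici.2 (le_max_right (-y) 0)) ha hb hab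
  simpa [smul_eq_mul] using this

private lemma trace_negPartRpow {A : Matrix (Fin m) (Fin m) ℝ} (hA : A.IsHermitian) (p : ℝ) :
    (negPartRpow hA p).trace = ∑ i, max (-(hA.eigenvalues i)) 0 ^ p := by
  unfold negPartRpow
  rw [Matrix.trace_mul_cycle,
    Matrix.mem_unitaryGroup_iff'.mp (hA.eigenvectorUnitary).2, Matrix.one_mul,
    Matrix.trace_diagonal]

private lemma trNegPow_eq {A : Matrix (Fin m) (Fin m) ℝ} (hA : A.IsHermitian) (γ : ℝ) :
    trNegPow γ A = ∑ i, max (-(hA.eigenvalues i)) 0 ^ γ := by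
  rw [trNegPow, dif_pos hA, trace_negPartRpow]

private lemma trNegPow_nonneg {A : Matrix (Fin m) (Fin m) ℝ} (hA : A.IsHermitian) (γ : ℝ) :
    0 ≤ trNegPow γ A := by
  rw [trNegPow_eq hA]
  exact Finset.sum_nonneg fun i _ => Real.rpow_nonneg (le_max_right _ _) _

/-- Peierls-type inequality: for convex `φ` and any unitary `U`,
`∑ i, φ ((U* A U)ᵢᵢ) ≤ ∑ j, φ (λⱼ(A))`. -/
private lemma peierls {A : Matrix (Fin m) (Fin m) ℝ} (hA : A.IsHermitian)
    {φ : ℝ → ℝ} (hφ : ConvexOn ℝ Set.univ φ)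
    {U : Matrix (Fin m) (Fin m) ℝ} (hU : U ∈ Matrix.unitaryGroup (Fin m) ℝ) :
    ∑ i, φ ((star U * A * U) i i) ≤ ∑ j, φ (hA.eigenvalues j) := by
  set W := (hA.eigenvectorUnitary : Matrix (Fin m) (Fin m) ℝ) with hW
  set M := star U * W with hM
  have hMU : M ∈ Matrix.unitaryGroup (Fin m) ℝ :=
    mul_mem (Unitary.star_mem hU) (hA.eigenvectorUnitary).2
  have hrow : ∀ i, ∑ j, (M i j) ^ 2 = 1 := by
    intro i
    have := congrFun (congrFun (Matrix.mem_unitaryGroup_iff.mp hMU) i) i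
    simpa [Matrix.mul_apply, Matrix.one_apply, sq] using this
  have hcol : ∀ j, ∑ i, (M i j) ^ 2 = 1 := by
    intro j
    have := congrFun (congrFun (Matrix.mem_unitaryGroup_iff'.mp hMU) j) j
    simpa [Matrix.mul_apply, Matrix.one_apply, sq, mul_comm] using this
  have hdiag : ∀ i, (star U * A * U) i i = ∑ j, (M i j) ^ 2 • hA.eigenvalues j := by
    intro i
    have hsub : star U * A * U = M * Matrix.diagonal hA.eigenvalues * star M := by
      rw [hM, Matrix.star_mul, star_star]
      conv_lhs => rw [hA.spectral_theorem, Unitary.conjStarAlgAut_apply]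
      simp only [Matrix.mul_assoc]
      rfl
    rw [hsub]
    rw [Matrix.mul_apply]
    refine Finset.sum_congr rfl fun j _ => ?_
    simp only [Matrix.mul_diagonal, Matrix.star_apply, star_trivial, sq, smul_eq_mul]
    ring
  calc ∑ i, φ ((star U * A * U) i i)
      = ∑ i, φ (∑ j, (M i j) ^ 2 • hA.eigenvalues j) := by
        refine Finset.sum_congr rfl fun i _ => ?_; rw [hdiag i]
    _ ≤ ∑ i, ∑ j, (M i j) ^ 2 * φ (hA.eigenvalues j) := by
        refine Finset.sum_le_sum fun i _ => ?_
        have := hφ.map_sum_le (t := Finset.univ) (w := fun j => (M i j) ^ 2)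
          (p := hA.eigenvalues) (fun j _ => sq_nonneg _) (hrow i)
          (fun j _ => Set.mem_univ _)
        simpa [smul_eq_mul] using this
    _ = ∑ j, φ (hA.eigenvalues j) := by
        rw [Finset.sum_comm]
        refine Finset.sum_congr rfl fun j _ => ?_
        rw [← Finset.sum_mul, hcol j, one_mul]

private lemma isHermitian_combo {A B : Matrix (Fin m) (Fin m) ℝ}
    (hA : A.IsHermitian) (hB : B.IsHermitian) (a b : ℝ) :
    (a • A + b • B).IsHermitian := by
  unfold Matrix.IsHermitian at *
  rw [Matrix.conjTranspose_add, Matrix.conjTranspose_smul, Matrix.conjTranspose_smul,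
    hA, hB]
  simp

/-- Convexity of `trNegPow` itself. -/
private lemma key2 {γ : ℝ} (hγ : 1 ≤ γ) {A B : Matrix (Fin m) (Fin m) ℝ}
    (hA : A.IsHermitian) (hB : B.IsHermitian) {a b : ℝ}
    (ha : 0 ≤ a) (hb : 0 ≤ b) (hab : a + b = 1) :
    trNegPow γ (a • A + b • B) ≤ a * trNegPow γ A + b * trNegPow γ B := by
  have hC : (a • A + b • B).IsHermitian := isHermitian_combo hA hB a b
  set U := (hC.eigenvectorUnitary : Matrix (Fin m) (Fin m) ℝ) with hUdef
  have hUmem : U ∈ Matrix.unitaryGroup (Fin m) ℝ := (hC.eigenvectorUnitary).2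
  have hφ := phi_cvx hγ
  have hdiagC : ∀ i, hC.eigenvalues i = (star U * (a • A + b • B) * U) i i := by
    intro i
    have hs : star U * (a • A + b • B) * U = Matrix.diagonal hC.eigenvalues := by
      conv_lhs => rw [hC.spectral_theorem, Unitary.conjStarAlgAut_apply]
      have hdd : Matrix.diagonal ((RCLike.ofReal ∘ hC.eigenvalues : Fin m → ℝ))
          = Matrix.diagonal hC.eigenvalues := rfl
      rw [hdd]
      rw [show (star (hC.eigenvectorUnitary : Matrix (Fin m) (Fin m) ℝ)) = star U from rfl]
      rw [← Matrix.mul_assoc, ← Matrix.mul_assoc, Matrix.mem_unitaryGroup_iff'.mp hUmem,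
        Matrix.one_mul, Matrix.mul_assoc, Matrix.mem_unitaryGroup_iff'.mp hUmem,
        Matrix.mul_one]
    rw [hs, Matrix.diagonal_apply_eq]
  have hlin : ∀ i, (star U * (a • A + b • B) * U) i i
      = a * (star U * A * U) i i + b * (star U * B * U) i i := by
    intro i
    simp [Matrix.mul_add, Matrix.add_mul, Matrix.mul_smul, Matrix.smul_mul]
  rw [trNegPow_eq hC, trNegPow_eq hA, trNegPow_eq hB]
  calc ∑ i, max (-(hC.eigenvalues i)) 0 ^ γ
      ≤ ∑ i, (a * (max (-((star U * A * U) i i)) 0 ^ γ)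
          + b * (max (-((star U * B * U) i i)) 0 ^ γ)) := by
        refine Finset.sum_le_sum fun i _ => ?_
        rw [hdiagC i, hlin i]
        have := hφ.2 (Set.mem_univ ((star U * A * U) i i))
          (Set.mem_univ ((star U * B * U) i i)) ha hb hab
        simpa [smul_eq_mul] using this
    _ = a * ∑ i, max (-((star U * A * U) i i)) 0 ^ γ
          + b * ∑ i, max (-((star U * B * U) i i)) 0 ^ γ := by
        rw [Finset.sum_add_distrib, Finset.mul_sum, Finset.mul_sum]
    _ ≤ a * ∑ j, max (-(hA.eigenvalues j)) 0 ^ γ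
          + b * ∑ j, max (-(hB.eigenvalues j)) 0 ^ γ := by
        exact add_le_add
          (mul_le_mul_of_nonneg_left (peierls hA hφ hUmem) ha)
          (mul_le_mul_of_nonneg_left (peierls hB hφ hUmem) hb)

/-- Convexity of `(trNegPow γ ·) ^ (1/γ)`. -/
private lemma key {γ : ℝ} (hγ : 1 ≤ γ) {A B : Matrix (Fin m) (Fin m) ℝ}
    (hA : A.IsHermitian) (hB : B.IsHermitian) {a b : ℝ}
    (ha : 0 ≤ a) (hb : 0 ≤ b) (hab : a + b = 1) :
    trNegPow γ (a • A + b • B) ^ (1 / γ)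
      ≤ a * trNegPow γ A ^ (1 / γ) + b * trNegPow γ B ^ (1 / γ) := by
  rcases eq_or_lt_of_le hγ with h1 | h1
  · subst h1
    simpa [Real.rpow_one] using key2 le_rfl hA hB ha hb hab
  -- now 1 < γ
  set q := γ / (γ - 1) with hq
  have hpq : γ.HolderConjugate q := Real.HolderConjugate.conjExponent h1
  have hC : (a • A + b • B).IsHermitian := isHermitian_combo hA hB a b
  set U := (hC.eigenvectorUnitary : Matrix (Fin m) (Fin m) ℝ) with hUdef
  have hUmem : U ∈ Matrix.unitaryGroup (Fin m) ℝ := (hC.eigenvectorUnitary).2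
  have hφ := phi_cvx hγ
  set d : Fin m → ℝ := fun i => max (-(hC.eigenvalues i)) 0 with hd
  set Abar : Fin m → ℝ := fun i => max (-((star U * A * U) i i)) 0 with hAbar
  set Bbar : Fin m → ℝ := fun i => max (-((star U * B * U) i i)) 0 with hBbar
  have hdnn : ∀ i, 0 ≤ d i := fun i => le_max_right _ _
  have hAbarnn : ∀ i, 0 ≤ Abar i := fun i => le_max_right _ _
  have hBbarnn : ∀ i, 0 ≤ Bbar i := fun i => le_max_right _ _
  set S : ℝ := ∑ i, d i ^ γ with hS
  have hSnn : 0 ≤ S :=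
    Finset.sum_nonneg fun i _ => Real.rpow_nonneg (hdnn i) _
  have hgC : trNegPow γ (a • A + b • B) = S := trNegPow_eq hC γ
  -- pointwise bound on d
  have hdiagC : ∀ i, hC.eigenvalues i = (star U * (a • A + b • B) * U) i i := by
    intro i
    have hs : star U * (a • A + b • B) * U = Matrix.diagonal hC.eigenvalues := by
      conv_lhs => rw [hC.spectral_theorem, Unitary.conjStarAlgAut_apply]
      have hdd : Matrix.diagonal ((RCLike.ofReal ∘ hC.eigenvalues : Fin m → ℝ))
          = Matrix.diagonal hC.eigenvalues := rfl
      rw [hdd]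
      rw [show (star (hC.eigenvectorUnitary : Matrix (Fin m) (Fin m) ℝ)) = star U from rfl]
      rw [← Matrix.mul_assoc, ← Matrix.mul_assoc, Matrix.mem_unitaryGroup_iff'.mp hUmem,
        Matrix.one_mul, Matrix.mul_assoc, Matrix.mem_unitaryGroup_iff'.mp hUmem,
        Matrix.mul_one]
    rw [hs, Matrix.diagonal_apply_eq]
  have hdle : ∀ i, d i ≤ a * Abar i + b * Bbar i := by
    intro i
    have hlin : (star U * (a • A + b • B) * U) i i
        = a * (star U * A * U) i i + b * (star U * B * U) i i := by
      simp [Matrix.mul_add, Matrix.add_mul, Matrix.mul_smul, Matrix.smul_mul]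
    rw [hd]
    simp only
    rw [hdiagC i, hlin]
    exact negPart_combo ha hb
  -- step 1
  have hγne : γ ≠ 0 := by positivity
  have step1 : S ≤ a * ∑ i, Abar i * d i ^ (γ - 1) + b * ∑ i, Bbar i * d i ^ (γ - 1) := by
    rw [Finset.mul_sum, Finset.mul_sum, ← Finset.sum_add_distrib]
    refine Finset.sum_le_sum fun i _ => ?_
    have hsplit : d i ^ γ = d i * d i ^ (γ - 1) := by
      rw [← Real.rpow_one_add' (hdnn i) (by rw [add_sub_cancel]; exact hγne)]
      ring_nf
    rw [hsplit]
    have := mul_le_mul_of_nonneg_right (hdle i) (Real.rpow_nonneg (hdnn i) (γ - 1))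
    calc d i * d i ^ (γ - 1) ≤ (a * Abar i + b * Bbar i) * d i ^ (γ - 1) := this
      _ = a * (Abar i * d i ^ (γ - 1)) + b * (Bbar i * d i ^ (γ - 1)) := by ring
  -- Hölder for each piece
  have hdq : ∀ i, (d i ^ (γ - 1)) ^ q = d i ^ γ := fun i => by
    rw [← Real.rpow_mul (hdnn i), hpq.sub_one_mul_conj]
  have eS : ∑ i, (d i ^ (γ - 1)) ^ q = S := Finset.sum_congr rfl fun i _ => hdq i
  have holder : ∀ (X : Matrix (Fin m) (Fin m) ℝ) (hX : X.IsHermitian)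
      (Xbar : Fin m → ℝ), (∀ i, Xbar i = max (-((star U * X * U) i i)) 0) →
      ∑ i, Xbar i * d i ^ (γ - 1) ≤ trNegPow γ X ^ (1 / γ) * S ^ (1 / q) := by
    intro X hX Xbar hXbar
    have hXnn : ∀ i ∈ Finset.univ, (0:ℝ) ≤ Xbar i := fun i _ => by
      rw [hXbar]; exact le_max_right _ _
    have h := Real.inner_le_Lp_mul_Lq_of_nonneg (s := Finset.univ) hpq hXnn
      (fun i _ => Real.rpow_nonneg (hdnn i) (γ - 1))
    rw [eS] at h
    refine h.trans ?_
    have e2 : ∑ i, Xbar i ^ γ ≤ trNegPow γ X := by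
      rw [trNegPow_eq hX]
      calc ∑ i, Xbar i ^ γ = ∑ i, max (-((star U * X * U) i i)) 0 ^ γ := by
            exact Finset.sum_congr rfl fun i _ => by rw [hXbar]
        _ ≤ _ := peierls hX hφ hUmem
    have : (∑ i, Xbar i ^ γ) ^ (1 / γ) ≤ trNegPow γ X ^ (1 / γ) :=
      Real.rpow_le_rpow (Finset.sum_nonneg fun i _ => Real.rpow_nonneg (hXnn i (Finset.mem_univ i)) _)
        e2 (by positivity)
    exact mul_le_mul_of_nonneg_right this (Real.rpow_nonneg hSnn _)
  have hfinal : S ≤ (a * trNegPow γ A ^ (1 / γ) + b * trNegPow γ B ^ (1 / γ)) * S ^ (1 / q) := by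
    have hA' := holder A hA Abar (fun i => rfl)
    have hB' := holder B hB Bbar (fun i => rfl)
    calc S ≤ a * ∑ i, Abar i * d i ^ (γ - 1) + b * ∑ i, Bbar i * d i ^ (γ - 1) := step1
      _ ≤ a * (trNegPow γ A ^ (1 / γ) * S ^ (1 / q))
            + b * (trNegPow γ B ^ (1 / γ) * S ^ (1 / q)) :=
          add_le_add (mul_le_mul_of_nonneg_left hA' ha) (mul_le_mul_of_nonneg_left hB' hb)
      _ = (a * trNegPow γ A ^ (1 / γ) + b * trNegPow γ B ^ (1 / γ)) * S ^ (1 / q) := by ring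
  rw [hgC]
  rcases eq_or_lt_of_le hSnn with h0 | h0
  · rw [← h0, Real.zero_rpow (one_div_ne_zero hγne)]
    have t1 := trNegPow_nonneg hA γ
    have t2 := trNegPow_nonneg hB γ
    have := Real.rpow_nonneg t1 (1 / γ)
    have := Real.rpow_nonneg t2 (1 / γ)
    positivity
  · have hq0 : 0 < S ^ (1 / q) := Real.rpow_pos_of_pos h0 _
    have hsplitS : S = S ^ (1 / γ) * S ^ (1 / q) := by
      rw [← Real.rpow_add h0, show 1 / γ + 1 / q = 1 by
        rw [one_div, one_div]; exact hpq.inv_add_inv_eq_one, Real.rpow_one]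
    nth_rewrite 1 [hsplitS] at hfinal
    exact le_of_mul_le_mul_right hfinal hq0

end Aux

/-- For `γ ≥ 1`, `A ↦ (tr(A₋^γ))^(1/γ)` is convex on the set of symmetric matrices (being a
supremum of the affine functions `A ↦ -tr(A τ)`), and consequently, for any fixed symmetric
`A₀`, the map `V ↦ tr((A₀ + V)₋^γ)` is convex in the symmetric matrix `V`. -/
theorem convexity_trace_negPart {m : ℕ} (γ : ℝ) (hγ : 1 ≤ γ) :
    ConvexOn ℝ {A : Matrix (Fin m) (Fin m) ℝ | A.IsHermitian}
      (fun A => (trNegPow γ A) ^ (1 / γ)) ∧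
    ∀ A₀ : Matrix (Fin m) (Fin m) ℝ, A₀.IsHermitian →
      ConvexOn ℝ {V : Matrix (Fin m) (Fin m) ℝ | V.IsHermitian}
        (fun V => trNegPow γ (A₀ + V)) := by
  have hconv : Convex ℝ {A : Matrix (Fin m) (Fin m) ℝ | A.IsHermitian} := by
    intro X hX Y hY a b ha hb hab
    exact isHermitian_combo hX hY a b
  constructor
  · refine ⟨hconv, fun A hA B hB a b ha hb hab => ?_⟩
    simpa [smul_eq_mul] using key hγ hA hB ha hb hab
  · intro A₀ hA₀
    refine ⟨hconv, fun V hV W hW a b ha hb hab => ?_⟩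
    have hcomb : A₀ + (a • V + b • W) = a • (A₀ + V) + b • (A₀ + W) := by
      have h : a • A₀ + b • A₀ = A₀ := by rw [← add_smul, hab, one_smul]
      calc A₀ + (a • V + b • W) = a • A₀ + b • A₀ + (a • V + b • W) := by rw [h]
        _ = a • (A₀ + V) + b • (A₀ + W) := by rw [smul_add, smul_add]; abel
    simp only [smul_eq_mul, hcomb]
    exact key2 hγ (hA₀.add hV) (hA₀.add hW) ha hb hab
end

section
/- If the sequence L_n satisfies L_{n+1} = L_n + K e^{-cL_n} with K, c > 0 and L_0 > 0, then L_n → ∞ and L_n = (1/c) log n + O(1) as n → ∞; in particular L_n / log n → 1/c. -/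
open Filter

private lemma exp_sub_one_le_mul (x : ℝ) : Real.exp x - 1 ≤ x * Real.exp x := by
  have h := Real.add_one_le_exp (-x)
  have h2 : Real.exp (-x) = (Real.exp x)⁻¹ := Real.exp_neg x
  have h3 : 0 < Real.exp x := Real.exp_pos x
  rw [h2] at h
  nlinarith [mul_le_mul_of_nonneg_right h h3.le,
    mul_inv_cancel₀ (ne_of_gt h3)]

/-- Logarithmic separation of bumps: if `L_{n+1} = L_n + K e^(-c L_n)` with `K, c > 0` and
`L₀ > 0`, then `L_n → ∞`, `L_n = (1/c) log n + O(1)`, and `L_n / log n → 1/c`. -/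
theorem log_separation (K c : ℝ) (hK : 0 < K) (hc : 0 < c) (L : ℕ → ℝ) (hL0 : 0 < L 0)
    (hrec : ∀ n, L (n + 1) = L n + K * Real.exp (-c * L n)) :
    Tendsto L atTop atTop ∧
    (∃ M : ℝ, ∀ n : ℕ, 1 ≤ n → |L n - (1 / c) * Real.log n| ≤ M) ∧
    Tendsto (fun n : ℕ => L n / Real.log n) atTop (nhds (1 / c)) := by
  set u : ℕ → ℝ := fun n => Real.exp (c * L n) with hu
  have hupos : ∀ n, 0 < u n := fun n => Real.exp_pos _
  have hunext : ∀ n, u (n + 1) = u n * Real.exp (c * K / u n) := by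
    intro n
    have hdiv : c * K / u n = c * K * Real.exp (-c * L n) := by
      rw [hu]
      rw [div_eq_mul_inv, ← Real.exp_neg]
      ring_nf
    simp only [hu, hrec n]
    rw [← Real.exp_add, hdiv]
    ring_nf
  -- lower step
  have hstep_low : ∀ n, u n + c * K ≤ u (n + 1) := by
    intro n
    rw [hunext n]
    have h := Real.add_one_le_exp (c * K / u n)
    have hx : u n * (c * K / u n) = c * K := by field_simp; exact div_self (hupos n).ne'
    nlinarith [mul_le_mul_of_nonneg_left h (hupos n).le]
  have hge0 : ∀ n, u 0 ≤ u n := by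
    intro n
    induction n with
    | zero => exact le_rfl
    | succ m ih => linarith [hstep_low m, mul_pos hc hK]
  -- lower bound
  have hlow : ∀ n : ℕ, u 0 + c * K * n ≤ u n := by
    intro n
    induction n with
    | zero => simp
    | succ m ih =>
      have := hstep_low m
      push_cast
      push_cast at ih
      linarith
  -- upper step
  set A : ℝ := c * K * Real.exp (c * K / u 0) with hA
  have hApos : 0 < A := by positivity
  have hstep_up : ∀ n, u (n + 1) ≤ u n + A := by
    intro n
    rw [hunext n]
    set x := c * K / u n with hxdef
    have hxle : x ≤ c * K / u 0 := by
      rw [hxdef]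
      gcongr
      exact hge0 n
    have h1 : Real.exp x - 1 ≤ x * Real.exp x := exp_sub_one_le_mul x
    have h2 : u n * x = c * K := by rw [hxdef]; field_simp; exact div_self (hupos n).ne'
    have h3 : Real.exp x ≤ Real.exp (c * K / u 0) := Real.exp_le_exp.2 hxle
    have h4 : 0 ≤ x := by positivity
    nlinarith [mul_le_mul_of_nonneg_left h1 (hupos n).le, Real.exp_pos x,
      mul_le_mul_of_nonneg_left h3 (mul_pos hc hK).le]
  have hup : ∀ n : ℕ, u n ≤ u 0 + A * n := by
    intro n
    induction n with
    | zero => simp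
    | succ m ih =>
      have := hstep_up m
      push_cast
      push_cast at ih
      linarith
  -- combined bounds for n ≥ 1
  have hbnd : ∀ n : ℕ, 1 ≤ n → c * K * n ≤ u n ∧ u n ≤ (u 0 + A) * n := by
    intro n hn
    have hn1 : (1 : ℝ) ≤ (n : ℝ) := by exact_mod_cast hn
    constructor
    · linarith [hlow n, (hupos 0)]
    · have := hup n
      nlinarith [(hupos 0)]
  have hlog : ∀ n, Real.log (u n) = c * L n := fun n => Real.log_exp _
  set M0 : ℝ := max |Real.log (c * K)| |Real.log (u 0 + A)| with hM0
  set M : ℝ := (1 / c) * M0 with hM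
  have hM0nonneg : 0 ≤ M0 := le_trans (abs_nonneg _) (le_max_left _ _)
  have hMain : ∀ n : ℕ, 1 ≤ n → |L n - (1 / c) * Real.log n| ≤ M := by
    intro n hn
    have hnpos : (0 : ℝ) < n := by exact_mod_cast hn
    obtain ⟨hlo, hhi⟩ := hbnd n hn
    have hlog_lo : Real.log (c * K) + Real.log n ≤ Real.log (u n) := by
      rw [← Real.log_mul (by positivity) (ne_of_gt hnpos)]
      exact Real.log_le_log (by positivity) hlo
    have hlog_hi : Real.log (u n) ≤ Real.log (u 0 + A) + Real.log n := by
      rw [← Real.log_mul (by positivity) (ne_of_gt hnpos)]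
      exact Real.log_le_log (hupos n) hhi
    have key : |Real.log (u n) - Real.log n| ≤ M0 := by
      rw [abs_le]
      constructor
      · have : -|Real.log (c * K)| ≤ Real.log (c * K) := neg_abs_le _
        have h2 := le_max_left |Real.log (c * K)| |Real.log (u 0 + A)|
        linarith
      · have : Real.log (u 0 + A) ≤ |Real.log (u 0 + A)| := le_abs_self _
        have h2 := le_max_right |Real.log (c * K)| |Real.log (u 0 + A)|
        linarith
    have heq : L n - (1 / c) * Real.log n = (1 / c) * (Real.log (u n) - Real.log n) := by
      rw [hlog n]; field_simp
    rw [heq, abs_mul, abs_of_pos (by positivity : (0:ℝ) < 1 / c), hM]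
    exact mul_le_mul_of_nonneg_left key (by positivity)
  refine ⟨?_, ⟨M, hMain⟩, ?_⟩
  · -- tendsto atTop
    have htend : Tendsto (fun n : ℕ => (1 / c) * Real.log n - M) atTop atTop := by
      apply tendsto_atTop_add_const_right
      exact (Real.tendsto_log_atTop.comp tendsto_natCast_atTop_atTop).const_mul_atTop
        (by positivity)
    apply tendsto_atTop_mono' _ _ htend
    filter_upwards [eventually_ge_atTop 1] with n hn
    have := hMain n hn
    have := abs_le.1 this
    linarith [this.1]
  · -- tendsto L n / log n → 1/c
    have h0 : Tendsto (fun n : ℕ => L n / Real.log n - 1 / c) atTop (nhds 0) := by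
      apply squeeze_zero_norm' (a := fun n : ℕ => M / Real.log n)
      · filter_upwards [eventually_ge_atTop 2] with n hn
        have hn1 : (1 : ℕ) ≤ n := le_trans (by norm_num) hn
        have hnR : (2 : ℝ) ≤ (n : ℝ) := by exact_mod_cast hn
        have hlogpos : 0 < Real.log n := Real.log_pos (by linarith)
        have heq : L n / Real.log n - 1 / c =
            (L n - (1 / c) * Real.log n) / Real.log n := by
          field_simp
        rw [Real.norm_eq_abs, heq, abs_div, abs_of_pos hlogpos]
        gcongr
        exact hMain n hn1
      · exact tendsto_const_nhds.div_atTop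
          (Real.tendsto_log_atTop.comp tendsto_natCast_atTop_atTop)
    have := h0.add_const (1 / c)
    simp only [sub_add_cancel, zero_add] at this
    exact this
end
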